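/- arXiv:1212.1542 — 5 statements merged into one kernel-verified Lean document; each statement's English description precedes it below -/
import Mathlib

section
/- Let κ be an uncountable cardinal, and let A_r ⊆ A_p be subsets of κ. Assume there is a normal ultrafilter V on κ with A_r ∈ V, and assume that for every α ∈ A_r there is a normal ultrafilter U_α on α with A_p ∩ α ∈ U_α. Then there exists a normal ultrafilter W on κ such that A_p ∈ W and A_r ∉ W. -/
open Set

namespace Separability

/-- `F` is an ultrafilter on the set `D` (members of `F` are subsets of `D`). -/
structure IsUltrafilterOnSet {σ : Type*} (D : Set σ) (F : Set (Set σ)) : Prop where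
  sets_subset : ∀ X ∈ F, X ⊆ D
  univ_mem : D ∈ F
  empty_not_mem : ∅ ∉ F
  superset_mem : ∀ X ∈ F, ∀ Y, Y ⊆ D → X ⊆ Y → Y ∈ F
  inter_mem : ∀ X ∈ F, ∀ Y ∈ F, X ∩ Y ∈ F
  mem_or_compl_mem : ∀ X, X ⊆ D → (X ∈ F ∨ D \ X ∈ F)

/-- An ultrafilter on (the type of ordinals below) `κ`. -/
def IsUltrafilterOn (κ : Ordinal) (F : Set (Set Ordinal)) : Prop :=
  IsUltrafilterOnSet (Set.Iio κ) F

/-- `F` is a *normal* ultrafilter on `κ`: it is an ultrafilter on `κ`, it contains every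
co-bounded subset of `κ`, and every function that is regressive on some member of `F`
is constant on some member of `F`. -/
def IsNormalUltrafilterOn (κ : Ordinal) (F : Set (Set Ordinal)) : Prop :=
  IsUltrafilterOn κ F ∧
  (∀ α < κ, {β | α ≤ β ∧ β < κ} ∈ F) ∧
  (∀ f : Ordinal → Ordinal, ∀ S ∈ F, (∀ β ∈ S, 0 < β → f β < β) →
    ∃ T ∈ F, ∃ γ, ∀ β ∈ T, f β = γ)

/-- The ordinal `κ` is a cardinal. -/
def IsCard (κ : Ordinal) : Prop := κ.card.ord = κ

/-- `F` (an ultrafilter on the set `D`) is `κ`-complete: it is closed under intersections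
of families of fewer than `κ` sets. -/
def IsComplete {σ : Type*} (κ : Ordinal) (D : Set σ) (F : Set (Set σ)) : Prop :=
  ∀ δ < κ, ∀ g : Set.Iio δ → Set σ, (∀ i, g i ∈ F) → (D ∩ ⋂ i, g i) ∈ F

/-- `F` is nonprincipal: it contains no singleton. -/
def IsNonprincipal {σ : Type*} (F : Set (Set σ)) : Prop := ∀ b : σ, {b} ∉ F

/-- `α` is a measurable cardinal: an uncountable cardinal carrying a nonprincipal
`α`-complete ultrafilter on `α`. -/
def IsMeasurable (α : Ordinal) : Prop :=
  IsCard α ∧ Ordinal.omega0 < α ∧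
    ∃ F, IsUltrafilterOn α F ∧ IsNonprincipal F ∧ IsComplete α (Set.Iio α) F

/-- `P_κ(λ)`: the subsets of `λ` of cardinality less than `κ`. -/
def sP (κ lam : Ordinal.{0}) : Set (Set Ordinal.{0}) :=
  {x | x ⊆ Set.Iio lam ∧ Cardinal.mk x < Cardinal.lift.{1} κ.card}

/-- `F`, an ultrafilter on `P_κ(λ)`, is *fine*:
for every `i < λ` the set `{x ∈ P_κ(λ) : i ∈ x}` belongs to `F`. -/
def IsFine (κ lam : Ordinal) (F : Set (Set (Set Ordinal))) : Prop :=
  ∀ i < lam, {x | x ∈ sP κ lam ∧ i ∈ x} ∈ F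

/-- `κ` is a compact (strongly compact) cardinal: an uncountable cardinal such that for every
cardinal `λ ≥ κ` there is a `κ`-complete fine ultrafilter on `P_κ(λ)`. -/
def IsCompact (κ : Ordinal) : Prop :=
  IsCard κ ∧ Ordinal.omega0 < κ ∧
    ∀ lam, IsCard lam → κ ≤ lam →
      ∃ F, IsUltrafilterOnSet (sP κ lam) F ∧ IsComplete κ (sP κ lam) F ∧ IsFine κ lam F

/-- `F`, an ultrafilter on `P_κ(λ)`, is *normal*: every choice function on a member of `F`
(`f x ∈ x` for all `x` in some member of `F`) is constant on some member of `F`. -/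
def IsNormalFineMeasure (F : Set (Set (Set Ordinal))) : Prop :=
  ∀ f : Set Ordinal → Ordinal, ∀ S ∈ F, (∀ x ∈ S, f x ∈ x) →
    ∃ T ∈ F, ∃ γ, ∀ x ∈ T, f x = γ

/-- `κ` is a supercompact cardinal: for every cardinal `λ ≥ κ` there is a `κ`-complete
fine normal ultrafilter on `P_κ(λ)`. -/
def IsSupercompact (κ : Ordinal) : Prop :=
  IsCard κ ∧
    ∀ lam, IsCard lam → κ ≤ lam →
      ∃ F, IsUltrafilterOnSet (sP κ lam) F ∧ IsComplete κ (sP κ lam) F ∧ IsFine κ lam F ∧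
        IsNormalFineMeasure F

/-- The set of measurable cardinals below `κ`. -/
def measSet (κ : Ordinal) : Set Ordinal := {α | α < κ ∧ IsMeasurable α}

/-- `S_X = {α < κ : α is measurable and X ∩ α ∈ U_α}`. -/
def sX (κ : Ordinal) (U : Ordinal → Set (Set Ordinal)) (X : Set Ordinal) : Set Ordinal :=
  {α | α < κ ∧ IsMeasurable α ∧ X ∩ Set.Iio α ∈ U α}

/-- The sum of `⟨U_α : α measurable below κ⟩` over `V`: `Y` belongs to the sum iff
`S_Y ∈ V`. -/
def sumUF (κ : Ordinal) (U : Ordinal → Set (Set Ordinal)) (V : Set (Set Ordinal)) :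
    Set (Set Ordinal) :=
  {Y | Y ⊆ Set.Iio κ ∧ sX κ U Y ∈ V}

/-- The sum of the ultrafilters `U α` (for `α ∈ S0`) over `V`. -/
def sumW (κ : Ordinal) (S0 : Set Ordinal) (U : Ordinal → Set (Set Ordinal))
    (V : Set (Set Ordinal)) : Set (Set Ordinal) :=
  {Y | Y ⊆ Set.Iio κ ∧ {α | α ∈ S0 ∧ Y ∩ Set.Iio α ∈ U α} ∈ V}

theorem sumW_normal {κ : Ordinal} (hlim : ∀ a < κ, a + 1 < κ)
    {V : Set (Set Ordinal)} (hV : IsNormalUltrafilterOn κ V)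
    {S0 : Set Ordinal} (hS0 : S0 ∈ V)
    {U : Ordinal → Set (Set Ordinal)}
    (hU : ∀ α ∈ S0, IsNormalUltrafilterOn α (U α)) :
    IsNormalUltrafilterOn κ (sumW κ S0 U V) := by
  obtain ⟨hVu, hVb, hVn⟩ := hV
  have hS0sub : S0 ⊆ Set.Iio κ := hVu.sets_subset S0 hS0
  have hsub : ∀ A : Set Ordinal, {α | α ∈ S0 ∧ A ∩ Set.Iio α ∈ U α} ⊆ Set.Iio κ :=
    fun A α hα => hS0sub hα.1
  have key : ∀ Y T : Set Ordinal, T ∈ V → T ⊆ S0 →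
      (∀ α ∈ T, Y ∩ Set.Iio α ∈ U α) → {α | α ∈ S0 ∧ Y ∩ Set.Iio α ∈ U α} ∈ V := by
    intro Y T hT hTS hall
    exact hVu.superset_mem T hT _ (hsub Y) (fun α hα => ⟨hTS hα, hall α hα⟩)
  have hUF : IsUltrafilterOnSet (Set.Iio κ) (sumW κ S0 U V) := by
    constructor
    · exact fun X hX => hX.1
    · refine ⟨subset_rfl, key _ S0 hS0 subset_rfl (fun α hα => ?_)⟩
      have h : Set.Iio κ ∩ Set.Iio α = Set.Iio α :=
        Set.inter_eq_self_of_subset_right (Set.Iio_subset_Iio (le_of_lt (hS0sub hα)))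
      rw [h]; exact (hU α hα).1.univ_mem
    · rintro ⟨-, hmem⟩
      have hempty : {α | α ∈ S0 ∧ (∅ : Set Ordinal) ∩ Set.Iio α ∈ U α} = ∅ := by
        ext α
        simp only [Set.empty_inter, Set.mem_setOf_eq, Set.mem_empty_iff_false, iff_false,
          not_and]
        exact fun hα h => (hU α hα).1.empty_not_mem h
      rw [hempty] at hmem; exact hVu.empty_not_mem hmem
    · intro X hX Y hYsub hXY
      refine ⟨hYsub, hVu.superset_mem _ hX.2 _ (hsub Y) ?_⟩
      rintro α ⟨hα, hXα⟩
      exact ⟨hα, (hU α hα).1.superset_mem _ hXα _ Set.inter_subset_right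
        (Set.inter_subset_inter_left _ hXY)⟩
    · intro X hX Y hY
      refine ⟨fun β hβ => hX.1 hβ.1, ?_⟩
      refine hVu.superset_mem _ (hVu.inter_mem _ hX.2 _ hY.2) _ (hsub _) ?_
      rintro α ⟨⟨hα, hXα⟩, -, hYα⟩
      refine ⟨hα, ?_⟩
      have heq : X ∩ Set.Iio α ∩ (Y ∩ Set.Iio α) = X ∩ Y ∩ Set.Iio α := by
        rw [Set.inter_inter_inter_comm, Set.inter_self]
      have h := (hU α hα).1.inter_mem _ hXα _ hYα
      rwa [heq] at h
    · intro X hXsub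
      rcases hVu.mem_or_compl_mem {α | α ∈ S0 ∧ X ∩ Set.Iio α ∈ U α} (hsub X) with hA | hA
      · exact Or.inl ⟨hXsub, hA⟩
      · refine Or.inr ⟨Set.diff_subset, ?_⟩
        refine hVu.superset_mem _ (hVu.inter_mem _ hS0 _ hA) _ (hsub _) ?_
        rintro α ⟨hα, -, hnot⟩
        refine ⟨hα, ?_⟩
        have hXn : X ∩ Set.Iio α ∉ U α := fun h => hnot ⟨hα, h⟩
        rcases (hU α hα).1.mem_or_compl_mem (X ∩ Set.Iio α) Set.inter_subset_right with h | h
        · exact absurd h hXn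
        · have heq : Set.Iio α \ (X ∩ Set.Iio α) = (Set.Iio κ \ X) ∩ Set.Iio α := by
            ext β
            simp only [Set.mem_diff, Set.mem_inter_iff, Set.mem_Iio]
            constructor
            · rintro ⟨hβα, hn⟩
              exact ⟨⟨lt_trans hβα (hS0sub hα), fun hβX => hn ⟨hβX, hβα⟩⟩, hβα⟩
            · rintro ⟨⟨-, hn⟩, hβα⟩
              exact ⟨hβα, fun hh => hn hh.1⟩
          rwa [heq] at h
  refine ⟨hUF, ?_, ?_⟩
  · intro a ha
    refine ⟨fun β hβ => hβ.2, ?_⟩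
    have hT : S0 ∩ {β | a + 1 ≤ β ∧ β < κ} ∈ V :=
      hVu.inter_mem _ hS0 _ (hVb (a + 1) (hlim a ha))
    refine hVu.superset_mem _ hT _ (hsub _) ?_
    rintro α ⟨hα, ha1, hακ⟩
    refine ⟨hα, ?_⟩
    have heq : {β | a ≤ β ∧ β < κ} ∩ Set.Iio α = {β | a ≤ β ∧ β < α} := by
      ext β
      simp only [Set.mem_inter_iff, Set.mem_setOf_eq, Set.mem_Iio]
      constructor
      · rintro ⟨⟨h1, -⟩, h2⟩; exact ⟨h1, h2⟩
      · rintro ⟨h1, h2⟩; exact ⟨⟨h1, lt_trans h2 hακ⟩, h2⟩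
    rw [heq]
    exact (hU α hα).2.1 a (lt_of_lt_of_le (lt_add_one a) ha1)
  · intro f S hS hreg
    have hκpos : 0 < κ := by
      have hne : S0.Nonempty := by
        rw [Set.nonempty_iff_ne_empty]
        intro h; rw [h] at hS0; exact hVu.empty_not_mem hS0
      obtain ⟨α0, hα0⟩ := hne
      exact lt_of_le_of_lt (zero_le (a := α0)) (hS0sub hα0)
    rcases hUF.mem_or_compl_mem {0} (by
        intro β hβ; rw [Set.mem_singleton_iff] at hβ; rw [hβ]; exact hκpos) with h0 | h0
    · refine ⟨{0}, h0, f 0, ?_⟩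
      intro β hβ; rw [Set.mem_singleton_iff] at hβ; rw [hβ]
    · set S' := S ∩ (Set.Iio κ \ {0}) with hS'def
      have hS'W : S' ∈ sumW κ S0 U V := hUF.inter_mem _ hS _ h0
      have hT0V : {α | α ∈ S0 ∧ S' ∩ Set.Iio α ∈ U α} ∈ V := hS'W.2
      have hch : ∀ α, ∃ p : Set Ordinal × Ordinal,
          α ∈ {α | α ∈ S0 ∧ S' ∩ Set.Iio α ∈ U α} →
          p.1 ∈ U α ∧ p.1 ⊆ S' ∩ Set.Iio α ∧ (∀ β ∈ p.1, f β = p.2) ∧ p.2 < α := by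
        intro α
        by_cases hα : α ∈ {α | α ∈ S0 ∧ S' ∩ Set.Iio α ∈ U α}
        · obtain ⟨hαS0, hSα⟩ := hα
          obtain ⟨T, hT, γ, hγ⟩ := (hU α hαS0).2.2 f (S' ∩ Set.Iio α) hSα
            (fun β hβ h0β => hreg β hβ.1.1 h0β)
          have hT' : T ∩ (S' ∩ Set.Iio α) ∈ U α := (hU α hαS0).1.inter_mem _ hT _ hSα
          have hne : (T ∩ (S' ∩ Set.Iio α)).Nonempty := by
            rw [Set.nonempty_iff_ne_empty]
            intro h; rw [h] at hT'; exact (hU α hαS0).1.empty_not_mem hT'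
          obtain ⟨β, hβT, hβS', hβα⟩ := hne
          have hβ0 : 0 < β := by
            have hne0 : β ≠ 0 := hβS'.2.2
            exact pos_iff_ne_zero.mpr hne0
          have hγα : γ < α := by
            rw [← hγ β hβT]
            exact lt_trans (hreg β hβS'.1 hβ0) hβα
          exact ⟨(T ∩ (S' ∩ Set.Iio α), γ),
            fun _ => ⟨hT', Set.inter_subset_right, fun β' hβ' => hγ β' hβ'.1, hγα⟩⟩
        · exact ⟨(∅, 0), fun h => absurd h hα⟩
      choose p hp using hch
      obtain ⟨T', hT'V, γ, hγ⟩ := hVn (fun α => (p α).2) _ hT0V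
        (fun α hα _ => (hp α hα).2.2.2)
      refine ⟨{β | β ∈ S' ∧ f β = γ}, ?_, γ, fun β hβ => hβ.2⟩
      refine ⟨fun β hβ => hS'W.1 hβ.1, ?_⟩
      refine key _ (T' ∩ {α | α ∈ S0 ∧ S' ∩ Set.Iio α ∈ U α})
        (hVu.inter_mem _ hT'V _ hT0V) (fun α hα => hα.2.1) ?_
      rintro α ⟨hαT', hα⟩
      refine (hU α hα.1).1.superset_mem _ (hp α hα).1 _ Set.inter_subset_right ?_
      intro β hβ
      have h1 := (hp α hα).2.1 hβ
      have h2 := (hp α hα).2.2.1 β hβ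
      exact ⟨⟨h1.1, h2.trans (hγ α hαT')⟩, h1.2⟩

theorem limits_mem {κ : Ordinal} (hlim : ∀ a < κ, a + 1 < κ)
    {V : Set (Set Ordinal)} (hV : IsNormalUltrafilterOn κ V) :
    {α | α < κ ∧ 0 < α ∧ ∀ b, α ≠ b + 1} ∈ V := by
  classical
  obtain ⟨hVu, hVb, hVn⟩ := hV
  have hκpos : 0 < κ := by
    rcases eq_zero_or_pos κ with h | h
    · exfalso
      have hu := hVu.univ_mem
      have : Set.Iio κ = ∅ := by
        ext β; simp only [Set.mem_Iio, Set.mem_empty_iff_false, iff_false, not_lt, h]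
        exact zero_le (a := β)
      rw [this] at hu; exact hVu.empty_not_mem hu
    · exact h
  have hSnot : {α | α < κ ∧ ∃ b, α = b + 1} ∉ V := by
    intro hSucc
    set f : Ordinal → Ordinal := fun α => if h : ∃ b, α = b + 1 then h.choose else 0 with hf
    have hfreg : ∀ α ∈ {α | α < κ ∧ ∃ b, α = b + 1}, 0 < α → f α < α := by
      rintro α ⟨-, hb⟩ -
      simp only [hf, dif_pos hb]
      conv_rhs => rw [hb.choose_spec]
      exact lt_add_one _
    obtain ⟨T, hT, γ, hγ⟩ := hVn f _ hSucc hfreg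
    have hTS : T ∩ {α | α < κ ∧ ∃ b, α = b + 1} ∈ V := hVu.inter_mem _ hT _ hSucc
    have hsub1 : T ∩ {α | α < κ ∧ ∃ b, α = b + 1} ⊆ {γ + 1} := by
      rintro α ⟨hαT, -, hb⟩
      have hfγ : f α = γ := hγ α hαT
      have hfα : α = f α + 1 := by
        simp only [hf, dif_pos hb]
        exact hb.choose_spec
      rw [Set.mem_singleton_iff, hfα, hfγ]
    have hne : (T ∩ {α | α < κ ∧ ∃ b, α = b + 1}).Nonempty := by
      rw [Set.nonempty_iff_ne_empty]
      intro h; rw [h] at hTS; exact hVu.empty_not_mem hTS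
    obtain ⟨α, hα⟩ := hne
    have hγ1κ : γ + 1 < κ := by
      have h := hsub1 hα
      rw [Set.mem_singleton_iff] at h
      rw [← h]; exact hα.2.1
    have h1 : ({γ + 1} : Set Ordinal) ∈ V := by
      refine hVu.superset_mem _ hTS _ ?_ hsub1
      intro β hβ; rw [Set.mem_singleton_iff] at hβ; rw [hβ]; exact hγ1κ
    have h2 : {β | γ + 1 + 1 ≤ β ∧ β < κ} ∈ V := hVb _ (hlim _ hγ1κ)
    have h3 := hVu.inter_mem _ h1 _ h2
    have hemp : ({γ + 1} : Set Ordinal) ∩ {β | γ + 1 + 1 ≤ β ∧ β < κ} = ∅ := by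
      ext β
      simp only [Set.mem_inter_iff, Set.mem_singleton_iff, Set.mem_setOf_eq,
        Set.mem_empty_iff_false, iff_false, not_and]
      intro hβ1 hβ2
      subst hβ1
      exact absurd hβ2 (not_le.mpr (lt_add_one _))
    rw [hemp] at h3; exact hVu.empty_not_mem h3
  have hcompl : Set.Iio κ \ {α | α < κ ∧ ∃ b, α = b + 1} ∈ V := by
    rcases hVu.mem_or_compl_mem {α | α < κ ∧ ∃ b, α = b + 1} (fun α hα => hα.1) with h | h
    · exact absurd h hSnot
    · exact h
  have h1 : {β | 1 ≤ β ∧ β < κ} ∈ V := by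
    have h01 : (0 : Ordinal) + 1 < κ := hlim 0 hκpos
    rw [zero_add] at h01
    exact hVb 1 h01
  refine hVu.superset_mem _ (hVu.inter_mem _ hcompl _ h1) _ (fun α hα => hα.1) ?_
  rintro α ⟨⟨hακ, hnS⟩, h1α, -⟩
  exact ⟨hακ, lt_of_lt_of_le zero_lt_one h1α, fun b hb => hnS ⟨hακ, b, hb⟩⟩

theorem separation_aux : ∀ κ : Ordinal, (∀ a < κ, a + 1 < κ) →
    ∀ Ap Ar : Set Ordinal, Ap ⊆ Set.Iio κ → Ar ⊆ Ap →
    ∀ V : Set (Set Ordinal), IsNormalUltrafilterOn κ V → Ar ∈ V →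
    (∀ α ∈ Ar, ∃ Uα, IsNormalUltrafilterOn α Uα ∧ Ap ∩ Set.Iio α ∈ Uα) →
    ∃ W, IsNormalUltrafilterOn κ W ∧ Ap ∈ W ∧ Ar ∉ W := by
  intro κ
  induction κ using Ordinal.induction with
  | h κ IH =>
    intro hlim Ap Ar hAp hAr V hV hArV hUa
    by_contra hcon
    push_neg at hcon
    have hArsub : Ar ⊆ Set.Iio κ := hV.1.sets_subset Ar hArV
    have hch : ∀ α, ∃ Uα, α ∈ Ar →
        IsNormalUltrafilterOn α Uα ∧ Ap ∩ Set.Iio α ∈ Uα := by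
      intro α
      by_cases hα : α ∈ Ar
      · obtain ⟨Uα, h1, h2⟩ := hUa α hα
        exact ⟨Uα, fun _ => ⟨h1, h2⟩⟩
      · exact ⟨∅, fun h => absurd h hα⟩
    choose U hU using hch
    have hW1 := sumW_normal hlim hV hArV (fun α hα => (hU α hα).1)
    have hApW1 : Ap ∈ sumW κ Ar U V := by
      refine ⟨hAp, hV.1.superset_mem _ hArV _ (fun α hα => hArsub hα.1) ?_⟩
      exact fun α hα => ⟨hα, (hU α hα).2⟩
    have hArW1 : Ar ∈ sumW κ Ar U V := hcon _ hW1 hApW1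
    have hSm : {α | α ∈ Ar ∧ Ar ∩ Set.Iio α ∈ U α} ∈ V := hArW1.2
    have hL := limits_mem hlim hV
    set S' := {α | α ∈ Ar ∧ Ar ∩ Set.Iio α ∈ U α} ∩
      {α | α < κ ∧ 0 < α ∧ ∀ b, α ≠ b + 1} with hS'def
    have hS'V : S' ∈ V := hV.1.inter_mem _ hSm _ hL
    have hch2 : ∀ α, ∃ Wα, α ∈ S' →
        IsNormalUltrafilterOn α Wα ∧ Ap ∩ Set.Iio α ∈ Wα ∧ Ar ∩ Set.Iio α ∉ Wα := by
      intro α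
      by_cases hα : α ∈ S'
      · obtain ⟨⟨hαAr, hArα⟩, hακ, hα0, hαsucc⟩ := hα
        have hαlim : ∀ a < α, a + 1 < α := by
          intro a haα
          have hle : a + 1 ≤ α := Order.add_one_le_iff.mpr haα
          exact lt_of_le_of_ne hle (fun h => hαsucc a h.symm)
        have hres := IH α hακ hαlim (Ap ∩ Set.Iio α) (Ar ∩ Set.Iio α)
          Set.inter_subset_right (Set.inter_subset_inter_left _ hAr)
          (U α) (hU α hαAr).1 hArα ?_
        · obtain ⟨Wα, hWα⟩ := hres
          exact ⟨Wα, fun _ => hWα⟩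
        · intro β hβ
          refine ⟨U β, (hU β hβ.1).1, ?_⟩
          have heq : Ap ∩ Set.Iio α ∩ Set.Iio β = Ap ∩ Set.Iio β := by
            ext x
            simp only [Set.mem_inter_iff, Set.mem_Iio]
            constructor
            · rintro ⟨⟨h1, -⟩, h3⟩; exact ⟨h1, h3⟩
            · rintro ⟨h1, h3⟩; exact ⟨⟨h1, lt_trans h3 hβ.2⟩, h3⟩
          rw [heq]
          exact (hU β hβ.1).2
      · exact ⟨∅, fun h => absurd h hα⟩
    choose Wf hWf using hch2
    have hW2 := sumW_normal hlim hV hS'V (fun α hα => (hWf α hα).1)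
    have hApW2 : Ap ∈ sumW κ S' Wf V := by
      refine ⟨hAp, hV.1.superset_mem _ hS'V _ (fun α hα => hArsub hα.1.1.1) ?_⟩
      exact fun α hα => ⟨hα, (hWf α hα).2.1⟩
    have hArW2 : Ar ∈ sumW κ S' Wf V := hcon _ hW2 hApW2
    have h2 := hArW2.2
    have hemp : {α | α ∈ S' ∧ Ar ∩ Set.Iio α ∈ Wf α} = ∅ := by
      ext α
      simp only [Set.mem_setOf_eq, Set.mem_empty_iff_false, iff_false, not_and]
      exact fun hα hmem => (hWf α hα).2.2 hmem
    rw [hemp] at h2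
    exact hV.1.empty_not_mem h2

/-- The generalized separation: if `A_r ⊆ A_p ⊆ κ`, some normal ultrafilter `V` on `κ`
contains `A_r`, and every `α ∈ A_r` carries a normal ultrafilter containing `A_p ∩ α`,
then some normal ultrafilter `W` on `κ` contains `A_p` but not `A_r`. -/
theorem generalized_separation (κ : Ordinal) (hcard : IsCard κ) (hunc : Ordinal.omega0 < κ)
    (Ap Ar : Set Ordinal) (hAp : Ap ⊆ Set.Iio κ) (hAr : Ar ⊆ Ap)
    (V : Set (Set Ordinal)) (hV : IsNormalUltrafilterOn κ V) (hArV : Ar ∈ V)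
    (hUa : ∀ α ∈ Ar, ∃ Uα, IsNormalUltrafilterOn α Uα ∧ Ap ∩ Set.Iio α ∈ Uα) :
    ∃ W, IsNormalUltrafilterOn κ W ∧ Ap ∈ W ∧ Ar ∉ W := by
  have hlim : ∀ a < κ, a + 1 < κ := by
    have h1 : Cardinal.aleph0 ≤ κ.card := by
      rw [← Ordinal.card_omega0]
      exact Ordinal.card_le_card hunc.le
    have h2 := Cardinal.isSuccLimit_ord h1
    rw [hcard] at h2
    intro a ha
    rw [Ordinal.add_one_eq_succ]
    exact h2.succ_lt ha
  exact separation_aux κ hlim Ap Ar hAp hAr V hV hArV hUa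

end Separability
end

section
/- Let κ be an uncountable cardinal, let V be a normal ultrafilter on κ, let A ∈ V, and for each α ∈ A let U_α be a normal ultrafilter on α. Define W by: for X ⊆ κ, X ∈ W if and only if {α ∈ A : X ∩ α ∈ U_α} ∈ V. Then W is a normal ultrafilter on κ. -/
open Set

namespace Separability

/-- The sum of normal ultrafilters `⟨U_α : α ∈ A⟩` over a normal ultrafilter `V` on `κ`
(with `A ∈ V`) is a normal ultrafilter on `κ`. -/
theorem sum_is_normal_ultrafilter (κ : Ordinal) (hcard : IsCard κ)
    (hunc : Ordinal.omega0 < κ)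
    (V : Set (Set Ordinal)) (hV : IsNormalUltrafilterOn κ V)
    (A : Set Ordinal) (hA : A ∈ V)
    (U : Ordinal → Set (Set Ordinal)) (hU : ∀ α ∈ A, IsNormalUltrafilterOn α (U α)) :
    IsNormalUltrafilterOn κ
      {X | X ⊆ Set.Iio κ ∧ {α | α ∈ A ∧ X ∩ Set.Iio α ∈ U α} ∈ V} := by
  classical
  obtain ⟨hVu, hVcb, hVn⟩ := hV
  have hAsub : A ⊆ Set.Iio κ := hVu.sets_subset A hA
  set SX : Set Ordinal → Set Ordinal := fun X => {α | α ∈ A ∧ X ∩ Set.Iio α ∈ U α} with hSXdef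
  have hSXsub : ∀ X, SX X ⊆ Set.Iio κ := fun X α hα => hAsub hα.1
  have hmono : ∀ X Y : Set Ordinal, X ⊆ Y → SX X ⊆ SX Y := by
    intro X Y hXY α hα
    refine ⟨hα.1, (hU α hα.1).1.superset_mem _ hα.2 _ inter_subset_right
      (inter_subset_inter_left _ hXY)⟩
  -- κ is a limit ordinal
  have hκ0 : Cardinal.aleph0 ≤ κ.card := by
    have := Ordinal.card_le_card hunc.le
    rwa [Ordinal.card_omega0] at this
  have hκlim : ∀ γ < κ, γ + 1 < κ := by
    intro γ hγ
    have hlim : Order.IsSuccLimit κ.card.ord := Cardinal.isSuccLimit_ord hκ0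
    rw [hcard] at hlim
    have := hlim.succ_lt hγ
    rwa [Order.succ_eq_add_one] at this
  have hconormal : ∀ γ < κ, {β | γ ≤ β ∧ β < κ} ∈
      {X | X ⊆ Set.Iio κ ∧ SX X ∈ V} := by
    intro γ0 hγ0
    refine ⟨fun β hβ => hβ.2, ?_⟩
    have hB : A ∩ {β | γ0 + 1 ≤ β ∧ β < κ} ∈ V :=
      hVu.inter_mem A hA _ (hVcb _ (hκlim γ0 hγ0))
    refine hVu.superset_mem _ hB _ (hSXsub _) ?_
    rintro α ⟨hαA, hγα, hακ⟩
    have hγlt : γ0 < α := by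
      rwa [Ordinal.add_one_eq_succ, Order.succ_le_iff] at hγα
    refine ⟨hαA, (hU α hαA).1.superset_mem _ ((hU α hαA).2.1 γ0 hγlt) _
      inter_subset_right ?_⟩
    rintro β ⟨hβ1, hβ2⟩
    exact ⟨⟨hβ1, Set.mem_Iio.mpr (lt_trans hβ2 (Set.mem_Iio.mp hακ))⟩, hβ2⟩
  refine ⟨⟨?_, ?_, ?_, ?_, ?_, ?_⟩, hconormal, ?_⟩
  · exact fun X hX => hX.1
  · -- univ_mem
    refine ⟨le_refl _, hVu.superset_mem A hA _ (hSXsub _) ?_⟩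
    intro α hα
    refine ⟨hα, ?_⟩
    have : Set.Iio κ ∩ Set.Iio α = Set.Iio α :=
      inter_eq_self_of_subset_right (Set.Iio_subset_Iio (le_of_lt (hAsub hα)))
    rw [this]; exact (hU α hα).1.univ_mem
  · -- empty_not_mem
    rintro ⟨-, h⟩
    have : {α | α ∈ A ∧ (∅ : Set Ordinal) ∩ Set.Iio α ∈ U α} = ∅ := by
      ext α
      simp only [Set.mem_setOf_eq, Set.empty_inter, Set.mem_empty_iff_false, iff_false,
        not_and]
      intro hα hcon
      exact (hU α hα).1.empty_not_mem hcon
    rw [this] at h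
    exact hVu.empty_not_mem h
  · -- superset_mem
    rintro X ⟨hX1, hX2⟩ Y hY hXY
    exact ⟨hY, hVu.superset_mem _ hX2 _ (hSXsub _) (hmono X Y hXY)⟩
  · -- inter_mem
    rintro X ⟨hX1, hX2⟩ Y ⟨hY1, hY2⟩
    refine ⟨fun β hβ => hX1 hβ.1, ?_⟩
    refine hVu.superset_mem _ (hVu.inter_mem _ hX2 _ hY2) _ (hSXsub _) ?_
    rintro α ⟨⟨hαA, hXα⟩, -, hYα⟩
    refine ⟨hαA, ?_⟩
    have : (X ∩ Y) ∩ Set.Iio α = (X ∩ Set.Iio α) ∩ (Y ∩ Set.Iio α) := by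
      ext β; constructor
      · rintro ⟨⟨h1, h2⟩, h3⟩; exact ⟨⟨h1, h3⟩, h2, h3⟩
      · rintro ⟨⟨h1, h3⟩, h2, -⟩; exact ⟨⟨h1, h2⟩, h3⟩
    rw [this]
    exact (hU α hαA).1.inter_mem _ hXα _ hYα
  · -- mem_or_compl_mem
    intro X hX
    rcases hVu.mem_or_compl_mem (SX X) (hSXsub X) with h | h
    · exact Or.inl ⟨hX, h⟩
    · refine Or.inr ⟨Set.diff_subset, ?_⟩
      refine hVu.superset_mem _ (hVu.inter_mem A hA _ h) _ (hSXsub _) ?_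
      rintro α ⟨hαA, hακ, hαn⟩
      have hXn : X ∩ Set.Iio α ∉ U α := fun hc => hαn ⟨hαA, hc⟩
      rcases (hU α hαA).1.mem_or_compl_mem (X ∩ Set.Iio α) inter_subset_right with h' | h'
      · exact absurd h' hXn
      · refine ⟨hαA, ?_⟩
        have heq : Set.Iio α \ (X ∩ Set.Iio α) = (Set.Iio κ \ X) ∩ Set.Iio α := by
          ext β; constructor
          · rintro ⟨hβα, hβn⟩
            exact ⟨⟨Set.mem_Iio.mpr (lt_trans (Set.mem_Iio.mp hβα) (Set.mem_Iio.mp hακ)),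
              fun hβX => hβn ⟨hβX, hβα⟩⟩, hβα⟩
          · rintro ⟨⟨-, hβX⟩, hβα⟩
            exact ⟨hβα, fun hc => hβX hc.1⟩
        rw [heq] at h'
        exact h'
  · -- normality
    rintro f S ⟨hSsub, hSS⟩ hreg
    -- for each α in SX S, get a constant set
    have hex : ∀ α, α ∈ SX S → ∃ T ∈ U α, ∃ γ, T ⊆ S ∩ Set.Iio α ∧ ∀ β ∈ T, f β = γ := by
      rintro α ⟨hαA, hSα⟩
      obtain ⟨T0, hT0, γ0, hγ0⟩ := (hU α hαA).2.2 f (S ∩ Set.Iio α) hSα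
        (fun β hβ h0 => hreg β hβ.1 h0)
      refine ⟨T0 ∩ (S ∩ Set.Iio α), (hU α hαA).1.inter_mem _ hT0 _ hSα, γ0,
        inter_subset_right, fun β hβ => hγ0 β hβ.1⟩
    choose! T hTU γfn hTsub hTconst using hex
    -- the set of relevant α's
    have h2κ : (1 : Ordinal) + 1 < κ := hκlim 1 (lt_trans Ordinal.one_lt_omega0 hunc)
    have hM : SX S ∩ {β | 1 + 1 ≤ β ∧ β < κ} ∈ V :=
      hVu.inter_mem _ hSS _ (hVcb _ h2κ)
    -- γfn is regressive on that set
    have hgreg : ∀ α ∈ SX S ∩ {β | 1 + 1 ≤ β ∧ β < κ}, 0 < α → γfn α < α := by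
      rintro α ⟨hαS, h2α, hακ⟩ -
      have h1α : (1 : Ordinal) < α := by
        rwa [Ordinal.add_one_eq_succ, Order.succ_le_iff] at h2α
      have hαA : α ∈ A := hαS.1
      have hB : T α ∩ {β | 1 ≤ β ∧ β < α} ∈ U α :=
        (hU α hαA).1.inter_mem _ (hTU α hαS) _ ((hU α hαA).2.1 1 h1α)
      have hne : (T α ∩ {β | 1 ≤ β ∧ β < α}).Nonempty := by
        rw [Set.nonempty_iff_ne_empty]
        intro hc
        rw [hc] at hB
        exact (hU α hαA).1.empty_not_mem hB
      obtain ⟨β, hβT, hβ1, hβα⟩ := hne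
      have hβS : β ∈ S := (hTsub α hαS hβT).1
      have : f β < β := hreg β hβS (lt_of_lt_of_le zero_lt_one hβ1)
      rw [hTconst α hαS β hβT] at this
      exact lt_trans this hβα
    obtain ⟨T', hT', c, hc⟩ := hVn γfn _ hM hgreg
    have hT'' : T' ∩ (SX S ∩ {β | 1 + 1 ≤ β ∧ β < κ}) ∈ V := hVu.inter_mem _ hT' _ hM
    -- the witness set
    refine ⟨{β | β ∈ S ∧ f β = c}, ⟨fun β hβ => hSsub hβ.1, ?_⟩, c, fun β hβ => hβ.2⟩
    refine hVu.superset_mem _ hT'' _ (hSXsub _) ?_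
    rintro α ⟨hαT', hαS, -⟩
    refine ⟨hαS.1, (hU α hαS.1).1.superset_mem _ (hTU α hαS) _ inter_subset_right ?_⟩
    intro β hβ
    have hβSα := hTsub α hαS hβ
    have : f β = c := by rw [hTconst α hαS β hβ]; exact hc α hαT'
    exact ⟨⟨hβSα.1, this⟩, hβSα.2⟩

end Separability
end

section
/- Let κ be a measurable cardinal, and for every measurable cardinal α < κ let U_α be a normal ultrafilter on α such that {β < α : β is measurable} ∉ U_α. For X ⊆ κ write S_X = {α < κ : α is measurable and X ∩ α ∈ U_α}. Let A_p, A_q ⊆ κ be such that every member of A_p is a measurable cardinal, and assume: (i) there is a normal ultrafilter V₁ on κ with A_p ∈ V₁ and A_q ∈ V₁; (ii) there is a normal ultrafilter V₀ on κ with A_p ∈ V₀ and A_q ∉ V₀; (iii) there is X ⊆ κ with S_X = A_p \ A_q. Then there exist two distinct normal ultrafilters W₀ ≠ W₁ on κ such that {α < κ : α is measurable} ∉ W₀ and {α < κ : α is measurable} ∉ W₁. -/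
open Set

namespace Separability

lemma sX_subset (κ : Ordinal) (U : Ordinal → Set (Set Ordinal)) (Y : Set Ordinal) :
    sX κ U Y ⊆ Set.Iio κ := fun _ h => h.1

lemma measSet_subset (κ : Ordinal) : measSet κ ⊆ Set.Iio κ := fun _ h => h.1

/-- Main lemma: the sum ultrafilter is a normal ultrafilter on `κ` avoiding `measSet κ`. -/
lemma sumUF_normal (κ : Ordinal) (hκ : IsMeasurable κ)
    (U : Ordinal → Set (Set Ordinal))
    (hU : ∀ α, α < κ → IsMeasurable α →
      IsNormalUltrafilterOn α (U α) ∧ {β | β < α ∧ IsMeasurable β} ∉ U α)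
    (V : Set (Set Ordinal)) (hV : IsNormalUltrafilterOn κ V) (hm : measSet κ ∈ V) :
    IsNormalUltrafilterOn κ (sumUF κ U V) ∧ measSet κ ∉ sumUF κ U V := by
  obtain ⟨⟨Vsub, Vuniv, Vemp, Vsup, Vinter, Vcompl⟩, Vcob, Vnorm⟩ := hV
  have hlim : Order.IsSuccLimit κ := by
    have h1 : Cardinal.aleph0 ≤ κ.card := by
      rw [Ordinal.aleph0_le_card]; exact hκ.2.1.le
    have := Cardinal.isSuccLimit_ord h1
    rwa [hκ.1] at this
  -- monotonicity of sX
  have hmono : ∀ Y Z : Set Ordinal, Y ⊆ Z → sX κ U Y ⊆ sX κ U Z := by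
    intro Y Z hYZ α hα
    obtain ⟨hα1, hα2, hα3⟩ := hα
    refine ⟨hα1, hα2, ?_⟩
    exact ((hU α hα1 hα2).1.1).superset_mem _ hα3 _ inter_subset_right
      (fun β hβ => ⟨hYZ hβ.1, hβ.2⟩)
  -- sX of intersection
  have hint : ∀ Y Z : Set Ordinal, sX κ U Y ∩ sX κ U Z ⊆ sX κ U (Y ∩ Z) := by
    intro Y Z α hα
    obtain ⟨⟨hα1, hα2, hα3⟩, ⟨_, _, hα4⟩⟩ := hα
    refine ⟨hα1, hα2, ?_⟩
    have h5 := ((hU α hα1 hα2).1.1).inter_mem _ hα3 _ hα4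
    exact ((hU α hα1 hα2).1.1).superset_mem _ h5 _ inter_subset_right
      (fun β hβ => ⟨⟨hβ.1.1, hβ.2.1⟩, hβ.1.2⟩)
  -- measSet is contained in sX of Iio κ
  have huniv : measSet κ ⊆ sX κ U (Set.Iio κ) := by
    intro α hα
    refine ⟨hα.1, hα.2, ?_⟩
    have : Set.Iio κ ∩ Set.Iio α = Set.Iio α :=
      Set.inter_eq_self_of_subset_right (Set.Iio_subset_Iio hα.1.le)
    rw [this]
    exact ((hU α hα.1 hα.2).1.1).univ_mem
  -- complement cover
  have hcover : ∀ Y : Set Ordinal, ∀ α ∈ measSet κ, α ∉ sX κ U Y →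
      α ∈ sX κ U (Set.Iio κ \ Y) := by
    intro Y α hα hαn
    have hUF := (hU α hα.1 hα.2).1.1
    refine ⟨hα.1, hα.2, ?_⟩
    rcases hUF.mem_or_compl_mem (Y ∩ Set.Iio α) inter_subset_right with h | h
    · exact absurd ⟨hα.1, hα.2, h⟩ hαn
    · refine hUF.superset_mem _ h _ inter_subset_right ?_
      intro β hβ
      exact ⟨⟨hβ.1.trans hα.1, fun hβY => hβ.2 ⟨hβY, hβ.1⟩⟩, hβ.1⟩
  have Wsub : ∀ Y ∈ sumUF κ U V, Y ⊆ Set.Iio κ := fun Y hY => hY.1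
  constructor
  · refine ⟨⟨Wsub, ?_, ?_, ?_, ?_, ?_⟩, ?_, ?_⟩
    · -- univ_mem
      exact ⟨subset_rfl, Vsup _ hm _ (sX_subset κ U _) huniv⟩
    · -- empty_not_mem
      intro h
      have : sX κ U ∅ = ∅ := by
        ext α
        simp only [Set.mem_empty_iff_false, iff_false]
        rintro ⟨hα1, hα2, hα3⟩
        have : (∅ : Set Ordinal) ∩ Set.Iio α = ∅ := Set.empty_inter _
        rw [this] at hα3
        exact ((hU α hα1 hα2).1.1).empty_not_mem hα3
      exact Vemp (this ▸ h.2)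
    · -- superset_mem
      intro Y hY Z hZsub hYZ
      exact ⟨hZsub, Vsup _ hY.2 _ (sX_subset κ U _) (hmono Y Z hYZ)⟩
    · -- inter_mem
      intro Y hY Z hZ
      refine ⟨fun β hβ => hY.1 hβ.1, ?_⟩
      exact Vsup _ (Vinter _ hY.2 _ hZ.2) _ (sX_subset κ U _) (hint Y Z)
    · -- mem_or_compl_mem
      intro Y hYsub
      rcases Vcompl (sX κ U Y) (sX_subset κ U Y) with h | h
      · exact Or.inl ⟨hYsub, h⟩
      · refine Or.inr ⟨Set.diff_subset, ?_⟩
        refine Vsup _ (Vinter _ hm _ h) _ (sX_subset κ U _) ?_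
        rintro α ⟨hα1, _, hα2⟩
        exact hcover Y α hα1 hα2
    · -- co-bounded sets
      intro α₀ hα₀
      refine ⟨fun β hβ => hβ.2, ?_⟩
      have hsucc : α₀ + 1 < κ := hlim.succ_lt hα₀
      have hVc : {β | α₀ + 1 ≤ β ∧ β < κ} ∈ V := Vcob _ hsucc
      refine Vsup _ (Vinter _ hm _ hVc) _ (sX_subset κ U _) ?_
      rintro α ⟨hα, hα₀α, hακ⟩
      refine ⟨hα.1, hα.2, ?_⟩
      have hUF := (hU α hα.1 hα.2).1
      have hα₀' : α₀ < α := lt_of_lt_of_le (Order.lt_succ α₀) hα₀α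
      have h1 : {β | α₀ ≤ β ∧ β < α} ∈ U α := hUF.2.1 α₀ hα₀'
      refine hUF.1.superset_mem _ h1 _ inter_subset_right ?_
      intro β hβ
      exact ⟨⟨hβ.1, hβ.2.trans hα.1⟩, hβ.2⟩
    · -- normality
      intro f S hS hreg
      obtain ⟨hSsub, hSX⟩ := hS
      have key : ∀ α, α ∈ sX κ U S → ∃ γ, γ < α ∧ ∃ T ∈ U α, ∀ β ∈ T, f β = γ := by
        rintro α ⟨hα1, hα2, hα3⟩
        obtain ⟨⟨UUF, Ucob, Unorm⟩, _⟩ := hU α hα1 hα2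
        have h1α : (1 : Ordinal) < α := lt_trans Ordinal.one_lt_omega0 hα2.2.1
        have hcb : {β | 1 ≤ β ∧ β < α} ∈ U α := Ucob 1 h1α
        have hS' : (S ∩ Set.Iio α) ∩ {β | 1 ≤ β ∧ β < α} ∈ U α := UUF.inter_mem _ hα3 _ hcb
        obtain ⟨T, hT, γ, hfγ⟩ := Unorm f _ hS' (fun β hβ hβ0 => hreg β hβ.1.1 hβ0)
        have hTn : T ∩ ((S ∩ Set.Iio α) ∩ {β | 1 ≤ β ∧ β < α}) ∈ U α := UUF.inter_mem _ hT _ hS'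
        obtain ⟨β, hβT, hβS⟩ : ∃ β, β ∈ T ∧ β ∈ (S ∩ Set.Iio α) ∩ {β | 1 ≤ β ∧ β < α} := by
          by_contra h
          push_neg at h
          have : T ∩ ((S ∩ Set.Iio α) ∩ {β | 1 ≤ β ∧ β < α}) = ∅ := by
            ext β
            simp only [Set.mem_inter_iff, Set.mem_empty_iff_false, iff_false]
            rintro ⟨h1, h2⟩
            exact h β h1 h2
          rw [this] at hTn
          exact UUF.empty_not_mem hTn
        refine ⟨γ, ?_, T, hT, hfγ⟩
        have h0 : 0 < β := lt_of_lt_of_le zero_lt_one hβS.2.1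
        calc γ = f β := (hfγ β hβT).symm
          _ < β := hreg β hβS.1.1 h0
          _ < α := hβS.1.2
      choose! g hkey using key
      obtain ⟨T', hT', γ, hγ⟩ := Vnorm g (sX κ U S) hSX (fun α hα _ => (hkey α hα).1)
      refine ⟨{β | β ∈ S ∧ f β = γ}, ⟨fun β hβ => hSsub hβ.1, ?_⟩, γ, fun β hβ => hβ.2⟩
      refine Vsup _ (Vinter _ hT' _ hSX) _ (sX_subset κ U _) ?_
      rintro α ⟨hαT', hαS⟩
      obtain ⟨_, Tα, hTα, hfTα⟩ := hkey α hαS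
      obtain ⟨hα1, hα2, hα3⟩ := hαS
      refine ⟨hα1, hα2, ?_⟩
      have hUF := (hU α hα1 hα2).1.1
      have h5 := hUF.inter_mem _ hTα _ hα3
      refine hUF.superset_mem _ h5 _ inter_subset_right ?_
      rintro β ⟨hβTα, hβS, hβα⟩
      refine ⟨⟨hβS, ?_⟩, hβα⟩
      rw [hfTα β hβTα, hγ α hαT']
  · -- measSet ∉ sumUF
    rintro ⟨_, h⟩
    have : sX κ U (measSet κ) = ∅ := by
      ext α
      simp only [Set.mem_empty_iff_false, iff_false]
      rintro ⟨hα1, hα2, hα3⟩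
      have heq : measSet κ ∩ Set.Iio α = {β | β < α ∧ IsMeasurable β} := by
        ext β
        constructor
        · rintro ⟨⟨_, hβm⟩, hβα⟩; exact ⟨hβα, hβm⟩
        · rintro ⟨hβα, hβm⟩; exact ⟨⟨hβα.trans hα1, hβm⟩, hβα⟩
      rw [heq] at hα3
      exact (hU α hα1 hα2).2 hα3
    rw [this] at h
    exact Vemp h

/-- If the properties `p, q` (given by `A_p, A_q`) are separable on `κ` and some `X ⊆ κ`
satisfies `S_X = A_p \ A_q`, then there are two distinct normal ultrafilters on `κ`
which do not contain the measurables. -/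
theorem two_normal_ultrafilters_avoiding_measurables (κ : Ordinal) (hκ : IsMeasurable κ)
    (U : Ordinal → Set (Set Ordinal))
    (hU : ∀ α, α < κ → IsMeasurable α →
      IsNormalUltrafilterOn α (U α) ∧ {β | β < α ∧ IsMeasurable β} ∉ U α)
    (Ap Aq : Set Ordinal) (hApsub : Ap ⊆ Set.Iio κ) (hAqsub : Aq ⊆ Set.Iio κ)
    (hApm : ∀ α ∈ Ap, IsMeasurable α)
    (V₁ : Set (Set Ordinal)) (hV₁ : IsNormalUltrafilterOn κ V₁)
    (h1p : Ap ∈ V₁) (h1q : Aq ∈ V₁)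
    (V₀ : Set (Set Ordinal)) (hV₀ : IsNormalUltrafilterOn κ V₀)
    (h0p : Ap ∈ V₀) (h0q : Aq ∉ V₀)
    (X : Set Ordinal) (hXsub : X ⊆ Set.Iio κ) (hSX : sX κ U X = Ap \ Aq) :
    ∃ W₀ W₁, IsNormalUltrafilterOn κ W₀ ∧ IsNormalUltrafilterOn κ W₁ ∧ W₀ ≠ W₁ ∧
      measSet κ ∉ W₀ ∧ measSet κ ∉ W₁ := by
  -- measSet ∈ V₀ and V₁ since Ap ⊆ measSet κ
  have hApmeas : Ap ⊆ measSet κ := fun α hα => ⟨hApsub hα, hApm α hα⟩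
  have hm₀ : measSet κ ∈ V₀ :=
    hV₀.1.superset_mem _ h0p _ (measSet_subset κ) hApmeas
  have hm₁ : measSet κ ∈ V₁ :=
    hV₁.1.superset_mem _ h1p _ (measSet_subset κ) hApmeas
  obtain ⟨hW₀, hW₀m⟩ := sumUF_normal κ hκ U hU V₀ hV₀ hm₀
  obtain ⟨hW₁, hW₁m⟩ := sumUF_normal κ hκ U hU V₁ hV₁ hm₁
  refine ⟨sumUF κ U V₀, sumUF κ U V₁, hW₀, hW₁, ?_, hW₀m, hW₁m⟩
  -- X distinguishes the two
  have hX₀ : X ∈ sumUF κ U V₀ := by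
    refine ⟨hXsub, ?_⟩
    rw [hSX]
    have hcAq : Set.Iio κ \ Aq ∈ V₀ := by
      rcases hV₀.1.mem_or_compl_mem Aq hAqsub with h | h
      · exact absurd h h0q
      · exact h
    refine hV₀.1.superset_mem _ (hV₀.1.inter_mem _ h0p _ hcAq) _
      (fun β hβ => hApsub hβ.1) ?_
    rintro β ⟨hβp, _, hβq⟩
    exact ⟨hβp, hβq⟩
  have hX₁ : X ∉ sumUF κ U V₁ := by
    rintro ⟨_, h⟩
    rw [hSX] at h
    have := hV₁.1.inter_mem _ h _ h1q
    have heq : (Ap \ Aq) ∩ Aq = ∅ := by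
      ext β
      simp only [Set.mem_inter_iff, Set.mem_diff, Set.mem_empty_iff_false, iff_false]
      tauto
    rw [heq] at this
    exact hV₁.1.empty_not_mem this
  intro heq
  rw [heq] at hX₀
  exact hX₁ hX₀

end Separability
end

section
/- Let κ be an uncountable cardinal, and for every measurable cardinal α < κ let U_α be a normal ultrafilter on α such that {β < α : β is measurable} ∉ U_α; for X ⊆ κ write S_X = {α < κ : α is measurable and X ∩ α ∈ U_α}. Let V₀ and V₁ be normal ultrafilters on κ, each containing M = {α < κ : α is measurable}, and suppose X ⊆ κ satisfies S_X ∈ V₀ and S_X ∉ V₁. Define W_ℓ (ℓ = 0, 1) by Y ∈ W_ℓ iff S_Y ∈ V_ℓ. Then W₀ and W₁ are normal ultrafilters on κ, M ∉ W₀ and M ∉ W₁, and X ∈ W₀ but X ∉ W₁; in particular W₀ ≠ W₁. -/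
open Set

namespace Separability

theorem sum_props (κ : Ordinal)
    (hlim : ∀ α < κ, α + 1 < κ)
    (U : Ordinal → Set (Set Ordinal))
    (hU : ∀ α, α < κ → IsMeasurable α →
      IsNormalUltrafilterOn α (U α) ∧ {β | β < α ∧ IsMeasurable β} ∉ U α)
    (V : Set (Set Ordinal)) (hV : IsNormalUltrafilterOn κ V) (hM : measSet κ ∈ V) :
    IsNormalUltrafilterOn κ (sumUF κ U V) ∧ measSet κ ∉ sumUF κ U V := by
  classical
  obtain ⟨hVu, hVcb, hVn⟩ := hV
  have hsub : ∀ Y, sX κ U Y ⊆ Set.Iio κ := fun Y α hα => hα.1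
  have hmono : ∀ Y Z : Set Ordinal, Y ⊆ Z → sX κ U Y ⊆ sX κ U Z := by
    rintro Y Z hYZ α ⟨hακ, hαm, hαU⟩
    refine ⟨hακ, hαm, ?_⟩
    exact (hU α hακ hαm).1.1.superset_mem _ hαU _ inter_subset_right
      (inter_subset_inter_left _ hYZ)
  have hIio : sX κ U (Set.Iio κ) = measSet κ := by
    ext α
    constructor
    · rintro ⟨h1, h2, _⟩; exact ⟨h1, h2⟩
    · rintro ⟨h1, h2⟩
      refine ⟨h1, h2, ?_⟩
      have heq : Set.Iio κ ∩ Set.Iio α = Set.Iio α := by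
        ext β; simp only [mem_inter_iff, mem_Iio]
        exact ⟨fun h => h.2, fun h => ⟨h.trans h1, h⟩⟩
      rw [heq]
      exact (hU α h1 h2).1.1.univ_mem
  constructor
  · refine ⟨⟨fun Y hY => hY.1, ⟨subset_refl _, by rw [hIio]; exact hM⟩, ?_, ?_, ?_, ?_⟩, ?_, ?_⟩
    · -- empty not mem
      rintro ⟨-, hmem⟩
      have hemp : sX κ U (∅ : Set Ordinal) = ∅ := by
        ext α; simp only [mem_empty_iff_false, iff_false]
        rintro ⟨hακ, hαm, hαU⟩
        rw [Set.empty_inter] at hαU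
        exact (hU α hακ hαm).1.1.empty_not_mem hαU
      rw [hemp] at hmem
      exact hVu.empty_not_mem hmem
    · -- superset
      rintro Y ⟨hYs, hYV⟩ Z hZs hYZ
      exact ⟨hZs, hVu.superset_mem _ hYV _ (hsub Z) (hmono Y Z hYZ)⟩
    · -- inter
      rintro Y ⟨hYs, hYV⟩ Z ⟨hZs, hZV⟩
      refine ⟨fun β hβ => hYs hβ.1, ?_⟩
      refine hVu.superset_mem _ (hVu.inter_mem _ hYV _ hZV) _ (hsub _) ?_
      rintro α ⟨⟨hακ, hαm, hYU⟩, ⟨-, -, hZU⟩⟩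
      refine ⟨hακ, hαm, ?_⟩
      have heq : (Y ∩ Z) ∩ Set.Iio α = (Y ∩ Set.Iio α) ∩ (Z ∩ Set.Iio α) := by
        ext β; simp only [mem_inter_iff]; tauto
      rw [heq]
      exact (hU α hακ hαm).1.1.inter_mem _ hYU _ hZU
    · -- mem or compl
      intro Y hY
      rcases hVu.mem_or_compl_mem (sX κ U Y) (hsub Y) with h | h
      · exact Or.inl ⟨hY, h⟩
      · right
        refine ⟨diff_subset, ?_⟩
        refine hVu.superset_mem _ (hVu.inter_mem _ h _ hM) _ (hsub _) ?_
        rintro α ⟨⟨hακ, hnot⟩, hαm⟩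
        refine ⟨hαm.1, hαm.2, ?_⟩
        rcases (hU α hαm.1 hαm.2).1.1.mem_or_compl_mem (Y ∩ Set.Iio α)
            inter_subset_right with hy | hy
        · exact absurd ⟨hαm.1, hαm.2, hy⟩ hnot
        · have heq : Set.Iio α \ (Y ∩ Set.Iio α) = (Set.Iio κ \ Y) ∩ Set.Iio α := by
            ext β
            simp only [mem_diff, mem_inter_iff, mem_Iio]
            constructor
            · rintro ⟨hβα, hn⟩
              exact ⟨⟨hβα.trans hαm.1, fun hyy => hn ⟨hyy, hβα⟩⟩, hβα⟩
            · rintro ⟨⟨-, hn⟩, hβα⟩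
              exact ⟨hβα, fun hyy => hn hyy.1⟩
          rwa [heq] at hy
    · -- cobounded
      intro α hα
      refine ⟨fun β hβ => hβ.2, ?_⟩
      refine hVu.superset_mem ({β | α + 1 ≤ β ∧ β < κ} ∩ measSet κ)
        (hVu.inter_mem _ (hVcb (α + 1) (hlim α hα)) _ hM) _ (hsub _) ?_
      rintro γ ⟨⟨hαγ, hγκ⟩, hγm⟩
      have hαγ' : α < γ := Order.add_one_le_iff.mp hαγ
      refine ⟨hγκ, hγm.2, ?_⟩
      obtain ⟨⟨hUγ, hUcb, -⟩, -⟩ := hU γ hγm.1 hγm.2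
      refine hUγ.superset_mem _ (hUcb α hαγ') _ inter_subset_right ?_
      rintro β ⟨hβ1, hβ2⟩
      exact ⟨⟨hβ1, hβ2.trans hγκ⟩, hβ2⟩
    · -- normality
      rintro f S ⟨hSsub, hSV⟩ hreg
      have key : ∀ α ∈ sX κ U S, ∃ γ, γ < α ∧
          ∃ T ∈ U α, T ⊆ S ∩ Set.Iio α ∧ ∀ β ∈ T, f β = γ := by
        rintro α ⟨hακ, hαm, hαU⟩
        obtain ⟨⟨hUα, hUcb, hUn⟩, -⟩ := hU α hακ hαm
        have h1α : (1 : Ordinal) < α := Ordinal.one_lt_omega0.trans hαm.2.1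
        have h1 : {β | 1 ≤ β ∧ β < α} ∈ U α := hUcb 1 h1α
        have hS'U : (S ∩ Set.Iio α) ∩ {β | 1 ≤ β ∧ β < α} ∈ U α :=
          hUα.inter_mem _ hαU _ h1
        obtain ⟨T, hT, γ, hγ⟩ := hUn f _ hS'U (fun β hβ h0 => hreg β hβ.1.1 h0)
        have hT'U : T ∩ ((S ∩ Set.Iio α) ∩ {β | 1 ≤ β ∧ β < α}) ∈ U α :=
          hUα.inter_mem _ hT _ hS'U
        have hT'ne : (T ∩ ((S ∩ Set.Iio α) ∩ {β | 1 ≤ β ∧ β < α})).Nonempty := by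
          rcases Set.eq_empty_or_nonempty
              (T ∩ ((S ∩ Set.Iio α) ∩ {β | 1 ≤ β ∧ β < α})) with h | h
          · rw [h] at hT'U; exact absurd hT'U hUα.empty_not_mem
          · exact h
        obtain ⟨β, hβT, hβS, hβ1⟩ := hT'ne
        refine ⟨γ, ?_, _, hT'U, fun x hx => hx.2.1, fun x hx => hγ x hx.1⟩
        have h1 : γ = f β := (hγ β hβT).symm
        have h2 : f β < β := hreg β hβS.1 (lt_of_lt_of_le zero_lt_one hβ1.1)
        exact h1 ▸ (h2.trans hβS.2)
      set g : Ordinal → Ordinal := fun α =>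
        if h : ∃ γ, γ < α ∧ ∃ T ∈ U α, T ⊆ S ∩ Set.Iio α ∧ ∀ β ∈ T, f β = γ
        then h.choose else 0 with hg
      have hreg' : ∀ α ∈ sX κ U S, 0 < α → g α < α := by
        intro α hα _
        have h := key α hα
        simp only [hg, dif_pos h]
        exact h.choose_spec.1
      obtain ⟨T₀, hT₀, γ₀, hγ₀⟩ := hVn g (sX κ U S) hSV hreg'
      refine ⟨{β ∈ S | f β = γ₀}, ⟨fun β hβ => hSsub hβ.1, ?_⟩, γ₀, fun β hβ => hβ.2⟩
      refine hVu.superset_mem (T₀ ∩ sX κ U S) (hVu.inter_mem _ hT₀ _ hSV) _ (hsub _) ?_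
      rintro α ⟨hα0, hαS⟩
      obtain ⟨hακ, hαm, hαU⟩ := hαS
      have h := key α ⟨hακ, hαm, hαU⟩
      obtain ⟨hγlt, T, hTU, hTsub', hTconst⟩ := h.choose_spec
      have hgα : g α = h.choose := dif_pos h
      have hchoose : h.choose = γ₀ := hgα.symm.trans (hγ₀ α hα0)
      refine ⟨hακ, hαm, ?_⟩
      refine (hU α hακ hαm).1.1.superset_mem T hTU _ inter_subset_right ?_
      intro β hβ
      exact ⟨⟨(hTsub' hβ).1, (hTconst β hβ).trans hchoose⟩, (hTsub' hβ).2⟩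
  · -- measSet not mem
    rintro ⟨-, hmem⟩
    have hemp : sX κ U (measSet κ) = ∅ := by
      ext α; simp only [mem_empty_iff_false, iff_false]
      rintro ⟨hακ, hαm, hαU⟩
      refine (hU α hακ hαm).2 ?_
      have heq : measSet κ ∩ Set.Iio α = {β | β < α ∧ IsMeasurable β} := by
        ext β
        constructor
        · rintro ⟨⟨-, hm⟩, hβα⟩; exact ⟨hβα, hm⟩
        · rintro ⟨hβα, hm⟩; exact ⟨⟨hβα.trans hακ, hm⟩, hβα⟩
      rwa [heq] at hαU
    rw [hemp] at hmem
    exact hVu.empty_not_mem hmem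

/-- If `S_X` belongs to `V₀` but not to `V₁`, then the sums `W₀, W₁` of `⟨U_α⟩` over
`V₀, V₁` are normal ultrafilters on `κ` which do not contain the measurables,
`X ∈ W₀`, `X ∉ W₁`, and in particular `W₀ ≠ W₁`. -/
theorem sums_give_distinct_ultrafilters (κ : Ordinal) (hcard : IsCard κ)
    (hunc : Ordinal.omega0 < κ)
    (U : Ordinal → Set (Set Ordinal))
    (hU : ∀ α, α < κ → IsMeasurable α →
      IsNormalUltrafilterOn α (U α) ∧ {β | β < α ∧ IsMeasurable β} ∉ U α)
    (V₀ V₁ : Set (Set Ordinal))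
    (hV₀ : IsNormalUltrafilterOn κ V₀) (hV₁ : IsNormalUltrafilterOn κ V₁)
    (hM₀ : measSet κ ∈ V₀) (hM₁ : measSet κ ∈ V₁)
    (X : Set Ordinal) (hXsub : X ⊆ Set.Iio κ)
    (hX₀ : sX κ U X ∈ V₀) (hX₁ : sX κ U X ∉ V₁) :
    IsNormalUltrafilterOn κ (sumUF κ U V₀) ∧ IsNormalUltrafilterOn κ (sumUF κ U V₁) ∧
      measSet κ ∉ sumUF κ U V₀ ∧ measSet κ ∉ sumUF κ U V₁ ∧
      X ∈ sumUF κ U V₀ ∧ X ∉ sumUF κ U V₁ ∧ sumUF κ U V₀ ≠ sumUF κ U V₁ := by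
  have hlim : ∀ α < κ, α + 1 < κ := by
    intro α hα
    have h1 : Cardinal.aleph0 ≤ κ.card := by
      have := Ordinal.card_le_card hunc.le
      simpa using this
    have h2 := Cardinal.isSuccLimit_ord h1
    rw [hcard] at h2
    exact h2.succ_lt hα
  obtain ⟨hW₀, hM₀'⟩ := sum_props κ hlim U hU V₀ hV₀ hM₀
  obtain ⟨hW₁, hM₁'⟩ := sum_props κ hlim U hU V₁ hV₁ hM₁
  have hX₀' : X ∈ sumUF κ U V₀ := ⟨hXsub, hX₀⟩
  have hX₁' : X ∉ sumUF κ U V₁ := fun h => hX₁ h.2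
  exact ⟨hW₀, hW₁, hM₀', hM₁', hX₀', hX₁', fun h => hX₁' (h ▸ hX₀')⟩

end Separability
end

section
/- Let κ be an uncountable cardinal, let γ ≥ κ be an ordinal, let U be a normal ultrafilter on κ, let A ∈ U be a set of uncountable cardinals, and for each α ∈ A let U_α be a fine ultrafilter on P_α(γ). Define V on P_κ(γ) by: x ∈ V if and only if {α ∈ A : x ∩ P_α(γ) ∈ U_α} ∈ U. Then V is a fine ultrafilter on P_κ(γ). -/
open Set

namespace Separability

/-- The sum of fine ultrafilters `⟨U_α : α ∈ A⟩` on `P_α(γ)` over a normal ultrafilter `U`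
on `κ` (with `A ∈ U` a set of uncountable cardinals) is a fine ultrafilter on `P_κ(γ)`. -/
theorem sum_is_fine_ultrafilter (κ : Ordinal) (hcard : IsCard κ)
    (hunc : Ordinal.omega0 < κ)
    (γ : Ordinal) (hγ : κ ≤ γ)
    (U : Set (Set Ordinal)) (hU : IsNormalUltrafilterOn κ U)
    (A : Set Ordinal) (hA : A ∈ U)
    (hAcard : ∀ α ∈ A, IsCard α ∧ Ordinal.omega0 < α)
    (Uf : Ordinal → Set (Set (Set Ordinal)))
    (hUf : ∀ α ∈ A, IsUltrafilterOnSet (sP α γ) (Uf α) ∧ IsFine α γ (Uf α)) :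
    IsUltrafilterOnSet (sP κ γ)
      {x | x ⊆ sP κ γ ∧ {α | α ∈ A ∧ x ∩ sP α γ ∈ Uf α} ∈ U} ∧
    IsFine κ γ {x | x ⊆ sP κ γ ∧ {α | α ∈ A ∧ x ∩ sP α γ ∈ Uf α} ∈ U} := by
  obtain ⟨hUU, hUb, hUn⟩ := hU
  have hAsub : A ⊆ Set.Iio κ := hUU.sets_subset A hA
  have hsub : ∀ α ∈ A, sP α γ ⊆ sP κ γ := by
    intro α hα x hx
    refine ⟨hx.1, hx.2.trans ?_⟩
    have h1 : α.card < κ.card := Cardinal.lt_ord.1 (by rw [hcard]; exact hAsub hα)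
    exact Cardinal.lift_lt.2 h1
  have hsubIio : ∀ X : Set (Set Ordinal), {α | α ∈ A ∧ X ∩ sP α γ ∈ Uf α} ⊆ Set.Iio κ :=
    fun X α hα => hAsub hα.1
  constructor
  · constructor
    · intro X hX; exact hX.1
    · refine ⟨subset_rfl, ?_⟩
      have he : {α | α ∈ A ∧ sP κ γ ∩ sP α γ ∈ Uf α} = A := by
        ext α; simp only [mem_setOf_eq]
        constructor
        · exact fun h => h.1
        · intro hα
          refine ⟨hα, ?_⟩
          have h2 : sP κ γ ∩ sP α γ = sP α γ := inter_eq_self_of_subset_right (hsub α hα)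
          rw [h2]; exact (hUf α hα).1.univ_mem
      rw [he]; exact hA
    · intro hX
      have he : {α | α ∈ A ∧ (∅ : Set (Set Ordinal)) ∩ sP α γ ∈ Uf α} = ∅ := by
        ext α; simp only [mem_setOf_eq, empty_inter, mem_empty_iff_false, iff_false]
        rintro ⟨hα, h⟩
        exact (hUf α hα).1.empty_not_mem h
      exact hUU.empty_not_mem (he ▸ hX.2)
    · intro X hX Y hY hXY
      refine ⟨hY, ?_⟩
      refine hUU.superset_mem _ hX.2 _ (hsubIio Y) ?_
      rintro α ⟨hα, h⟩
      exact ⟨hα, (hUf α hα).1.superset_mem _ h _ inter_subset_right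
        (inter_subset_inter_left _ hXY)⟩
    · intro X hX Y hY
      refine ⟨inter_subset_left.trans hX.1, ?_⟩
      refine hUU.superset_mem _ (hUU.inter_mem _ hX.2 _ hY.2) _ (hsubIio _) ?_
      rintro α ⟨⟨hα, h1⟩, ⟨-, h2⟩⟩
      refine ⟨hα, ?_⟩
      have he : X ∩ Y ∩ sP α γ = (X ∩ sP α γ) ∩ (Y ∩ sP α γ) := by
        ext z; simp only [mem_inter_iff]; tauto
      rw [he]; exact (hUf α hα).1.inter_mem _ h1 _ h2
    · intro X hX
      by_cases hS : {α | α ∈ A ∧ X ∩ sP α γ ∈ Uf α} ∈ U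
      · exact Or.inl ⟨hX, hS⟩
      · right
        refine ⟨diff_subset, ?_⟩
        have hcomp : Set.Iio κ \ {α | α ∈ A ∧ X ∩ sP α γ ∈ Uf α} ∈ U := by
          rcases hUU.mem_or_compl_mem _ (hsubIio X) with h | h
          · exact absurd h hS
          · exact h
        have hmem : A ∩ (Set.Iio κ \ {α | α ∈ A ∧ X ∩ sP α γ ∈ Uf α}) ∈ U :=
          hUU.inter_mem _ hA _ hcomp
        refine hUU.superset_mem _ hmem _ (hsubIio _) ?_
        rintro α ⟨hα, -, hns⟩
        refine ⟨hα, ?_⟩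
        have hnot : X ∩ sP α γ ∉ Uf α := fun h => hns ⟨hα, h⟩
        rcases (hUf α hα).1.mem_or_compl_mem (X ∩ sP α γ) inter_subset_right with h | h
        · exact absurd h hnot
        · have he : sP α γ \ (X ∩ sP α γ) = (sP κ γ \ X) ∩ sP α γ := by
            ext z
            constructor
            · rintro ⟨hz, hnz⟩
              exact ⟨⟨hsub α hα hz, fun hzx => hnz ⟨hzx, hz⟩⟩, hz⟩
            · rintro ⟨⟨-, hnz⟩, hz⟩
              exact ⟨hz, fun h2 => hnz h2.1⟩
          rwa [he] at h
  · intro i hi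
    refine ⟨fun x hx => hx.1, ?_⟩
    refine hUU.superset_mem _ hA _ (hsubIio _) ?_
    intro α hα
    refine ⟨hα, ?_⟩
    have heq : {x | x ∈ sP κ γ ∧ i ∈ x} ∩ sP α γ = {x | x ∈ sP α γ ∧ i ∈ x} := by
      ext z
      constructor
      · rintro ⟨⟨-, hz⟩, hz2⟩; exact ⟨hz2, hz⟩
      · rintro ⟨hz, hz2⟩; exact ⟨⟨hsub α hα hz, hz2⟩, hz⟩
    rw [heq]; exact (hUf α hα).2 i hi

end Separability
end
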